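/- Let A₁,…,A_k, B₁,…,B_k, C be n×n complex matrices simultaneously diagonalized by S, with eigenvalue vectors aʲ, bʲ, c as above, and let Γ_{rs} = ∑_{j=1}^k aʲ_r bʲ_s. Then the equation ∑_{j=1}^k A_j X B_j = C has a solution X if and only if for every r ∈ {1,…,n}, either Γ_{rr} ≠ 0 or c_r = 0. -/

import Mathlib

open Matrix

/-- Consistency criterion: with all parameters simultaneously diagonalized by `S`,
`∑ j, A j * X * B j = C` has a solution iff for every `r`, `Γ_{rr} ≠ 0` or `c_r = 0`. -/
theorem stmt4 {n k : ℕ} (A B : Fin k → Matrix (Fin n) (Fin n) ℂ)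
    (C S : Matrix (Fin n) (Fin n) ℂ)
    (a b : Fin k → Fin n → ℂ) (c : Fin n → ℂ)
    (hS : IsUnit S.det)
    (hA : ∀ j, S⁻¹ * A j * S = Matrix.diagonal (a j))
    (hB : ∀ j, S⁻¹ * B j * S = Matrix.diagonal (b j))
    (hC : S⁻¹ * C * S = Matrix.diagonal c) :
    (∃ X : Matrix (Fin n) (Fin n) ℂ, ∑ j, A j * X * B j = C) ↔
      ∀ r : Fin n, (∑ j, a j r * b j r) ≠ 0 ∨ c r = 0 := by
  have hSS : S * S⁻¹ = 1 := mul_nonsing_inv S hS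
  have hSS' : S⁻¹ * S = 1 := nonsing_inv_mul S hS
  have conj_mul : ∀ M N : Matrix (Fin n) (Fin n) ℂ,
      (S⁻¹ * M * S) * (S⁻¹ * N * S) = S⁻¹ * (M * N) * S := by
    intro M N
    calc (S⁻¹ * M * S) * (S⁻¹ * N * S)
        = S⁻¹ * M * (S * S⁻¹) * N * S := by
          simp only [Matrix.mul_assoc]
      _ = S⁻¹ * (M * N) * S := by rw [hSS]; simp only [Matrix.mul_one, Matrix.mul_assoc]
  have unconj : ∀ M D : Matrix (Fin n) (Fin n) ℂ,
      S⁻¹ * M * S = D → M = S * D * S⁻¹ := by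
    intro M D hMD
    rw [← hMD]
    calc M = (S * S⁻¹) * M * (S * S⁻¹) := by rw [hSS]; simp
      _ = S * (S⁻¹ * M * S) * S⁻¹ := by simp only [Matrix.mul_assoc]
  have entry : ∀ (Y : Matrix (Fin n) (Fin n) ℂ) (r s : Fin n),
      (∑ j, Matrix.diagonal (a j) * Y * Matrix.diagonal (b j)) r s
        = (∑ j, a j r * b j s) * Y r s := by
    intro Y r s
    rw [Matrix.sum_apply, Finset.sum_mul]
    refine Finset.sum_congr rfl fun j _ => ?_
    simp [Matrix.mul_apply, Matrix.diagonal_apply, ite_mul, mul_comm, mul_left_comm]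
  constructor
  · rintro ⟨X, hX⟩ r
    by_cases hΓ : (∑ j, a j r * b j r) = 0
    · right
      have key : Matrix.diagonal c
          = ∑ j, Matrix.diagonal (a j) * (S⁻¹ * X * S) * Matrix.diagonal (b j) := by
        rw [← hC, ← hX, Finset.mul_sum, Finset.sum_mul]
        refine Finset.sum_congr rfl fun j _ => ?_
        rw [← hA j, ← hB j, conj_mul, conj_mul]
      have := congrArg (fun M => M r r) key
      rw [entry, hΓ, zero_mul, Matrix.diagonal_apply_eq] at this
      exact this
    · left; exact hΓ
  · intro h
    set Γ : Fin n → ℂ := fun r => ∑ j, a j r * b j r with hΓdef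
    set Y : Matrix (Fin n) (Fin n) ℂ :=
      Matrix.of fun r s => if r = s ∧ Γ r ≠ 0 then c r / Γ r else 0 with hY
    refine ⟨S * Y * S⁻¹, ?_⟩
    have hD : (∑ j, Matrix.diagonal (a j) * Y * Matrix.diagonal (b j))
        = Matrix.diagonal c := by
      ext r s
      rw [entry]
      by_cases hrs : r = s
      · subst hrs
        rw [Matrix.diagonal_apply_eq]
        by_cases hΓ : Γ r ≠ 0
        · have hYr : Y r r = c r / Γ r := by simp [hY, hΓ]
          rw [hYr, hΓdef]
          simp only [hΓdef] at hΓ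
          field_simp
        · push_neg at hΓ
          have hc : c r = 0 := by
            rcases h r with h1 | h2
            · exact absurd hΓ h1
            · exact h2
          have hYr : Y r r = 0 := by simp [hY, hΓ]
          rw [hYr, mul_zero, hc]
      · have hYr : Y r s = 0 := by simp [hY, hrs]
        rw [hYr, mul_zero, Matrix.diagonal_apply_ne _ hrs]
    calc ∑ j, A j * (S * Y * S⁻¹) * B j
        = ∑ j, S * (Matrix.diagonal (a j) * Y * Matrix.diagonal (b j)) * S⁻¹ := by
          refine Finset.sum_congr rfl fun j _ => ?_
          rw [unconj (A j) _ (hA j), unconj (B j) _ (hB j)]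
          calc S * Matrix.diagonal (a j) * S⁻¹ * (S * Y * S⁻¹)
                * (S * Matrix.diagonal (b j) * S⁻¹)
              = S * (Matrix.diagonal (a j) * ((S⁻¹ * S) * (Y * ((S⁻¹ * S)
                  * (Matrix.diagonal (b j) * S⁻¹))))) := by
                simp only [Matrix.mul_assoc]
            _ = S * (Matrix.diagonal (a j) * Y * Matrix.diagonal (b j)) * S⁻¹ := by
                rw [hSS']; simp only [Matrix.one_mul, Matrix.mul_assoc]
      _ = S * (∑ j, Matrix.diagonal (a j) * Y * Matrix.diagonal (b j)) * S⁻¹ := by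
          rw [Finset.mul_sum, Finset.sum_mul]
      _ = C := by rw [hD, ← unconj C _ hC]
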